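/- Let E be a 2n-dimensional F_2-vector space with nondegenerate hyperbolic quadratic form. Fix a maximal isotropic subspace F_0 and define ε(F) = (−1)^{dim(F ∩ F_0)} for maximal isotropic subspaces F. Then for every isotropic subspace F' of E that is not maximal, the sum of ε(F) over all maximal isotropic subspaces F containing F' is zero. -/

import Mathlib

open Module

/-- The hyperbolic quadratic form on `F₂^n ⊕ F₂^n`. -/
def hypq (n : ℕ) (x : (Fin n ⊕ Fin n) → ZMod 2) : ZMod 2 :=
  ∑ j : Fin n, x (Sum.inl j) * x (Sum.inr j)

def IsIsotropic (n : ℕ) (F : Submodule (ZMod 2) ((Fin n ⊕ Fin n) → ZMod 2)) : Prop :=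
  ∀ x ∈ F, hypq n x = 0

def IsMaxIsotropic (n : ℕ) (F : Submodule (ZMod 2) ((Fin n ⊕ Fin n) → ZMod 2)) : Prop :=
  IsIsotropic n F ∧ ∀ F', IsIsotropic n F' → F ≤ F' → F' = F

namespace HypAux

abbrev E (n : ℕ) := (Fin n ⊕ Fin n) → ZMod 2

/-- The associated (polar) bilinear form. -/
noncomputable def hb (n : ℕ) : LinearMap.BilinForm (ZMod 2) (E n) :=
  LinearMap.mk₂ (ZMod 2)
    (fun x y => ∑ j : Fin n,
      (x (Sum.inl j) * y (Sum.inr j) + x (Sum.inr j) * y (Sum.inl j)))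
    (fun x x' y => by
      simp only [Pi.add_apply, ← Finset.sum_add_distrib]
      exact Finset.sum_congr rfl fun j _ => by ring)
    (fun c x y => by
      simp only [Pi.smul_apply, smul_eq_mul, Finset.mul_sum]
      exact Finset.sum_congr rfl fun j _ => by ring)
    (fun x y y' => by
      simp only [Pi.add_apply, ← Finset.sum_add_distrib]
      exact Finset.sum_congr rfl fun j _ => by ring)
    (fun c x y => by
      simp only [Pi.smul_apply, smul_eq_mul, Finset.mul_sum]
      exact Finset.sum_congr rfl fun j _ => by ring)

lemma hb_apply (n : ℕ) (x y : E n) :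
    hb n x y = ∑ j : Fin n,
      (x (Sum.inl j) * y (Sum.inr j) + x (Sum.inr j) * y (Sum.inl j)) := rfl

lemma hb_symm (n : ℕ) (x y : E n) : hb n x y = hb n y x := by
  rw [hb_apply, hb_apply]
  exact Finset.sum_congr rfl fun j _ => by ring

lemma hb_refl (n : ℕ) : (hb n).IsRefl := fun x y h => by rw [hb_symm]; exact h

lemma hb_self (n : ℕ) (x : E n) : hb n x x = 0 := by
  rw [hb_apply]
  have : ∀ j : Fin n, x (Sum.inl j) * x (Sum.inr j) + x (Sum.inr j) * x (Sum.inl j) = 0 := by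
    intro j
    have h : ∀ a : ZMod 2, a + a = 0 := by decide
    rw [mul_comm (x (Sum.inr j))]
    exact h _
  simp [this]

lemma polar (n : ℕ) (x y : E n) :
    hypq n (x + y) = hypq n x + hypq n y + hb n x y := by
  unfold hypq
  rw [hb_apply]
  simp only [Pi.add_apply, ← Finset.sum_add_distrib]
  refine Finset.sum_congr rfl fun j _ => ?_
  have h : ∀ a b c d : ZMod 2, (a + b) * (c + d) = a * c + b * d + (a * d + c * b) := by decide
  exact h _ _ _ _

lemma hb_nondeg (n : ℕ) : (hb n).Nondegenerate := by
  have hL : ∀ x : E n, (∀ y, hb n x y = 0) → x = 0 := by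
    intro x hx
    funext i
    cases i with
    | inl j =>
      have := hx (Pi.single (Sum.inr j) 1)
      rw [hb_apply] at this
      simpa [Pi.single_apply, Finset.sum_ite_eq] using this
    | inr j =>
      have := hx (Pi.single (Sum.inl j) 1)
      rw [hb_apply] at this
      simpa [Pi.single_apply, Finset.sum_ite_eq] using this
  exact ⟨hL, fun y hy => hL y fun x => by rw [hb_symm]; exact hy x⟩

lemma finrank_E (n : ℕ) : finrank (ZMod 2) (E n) = 2 * n := by
  simp [E, Module.finrank_pi]
  ring

/-- Orthogonal complement w.r.t. `hb`. -/
noncomputable abbrev orth (n : ℕ) (W : Submodule (ZMod 2) (E n)) : Submodule (ZMod 2) (E n) :=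
  (hb n).orthogonal W

lemma mem_orth (n : ℕ) (W : Submodule (ZMod 2) (E n)) (x : E n) :
    x ∈ orth n W ↔ ∀ y ∈ W, hb n y x = 0 := Iff.rfl

lemma finrank_orth (n : ℕ) (W : Submodule (ZMod 2) (E n)) :
    finrank (ZMod 2) (orth n W) = 2 * n - finrank (ZMod 2) W := by
  rw [LinearMap.BilinForm.finrank_orthogonal (hb_nondeg n), finrank_E]

lemma orth_orth (n : ℕ) (W : Submodule (ZMod 2) (E n)) : orth n (orth n W) = W :=
  LinearMap.BilinForm.orthogonal_orthogonal (hb_nondeg n) (hb_refl n) W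

lemma orth_le (n : ℕ) {A B : Submodule (ZMod 2) (E n)} (h : A ≤ B) : orth n B ≤ orth n A :=
  LinearMap.BilinForm.orthogonal_le h

lemma orth_sup (n : ℕ) (A B : Submodule (ZMod 2) (E n)) :
    orth n (A ⊔ B) = orth n A ⊓ orth n B := by
  apply le_antisymm
  · exact le_inf (orth_le n le_sup_left) (orth_le n le_sup_right)
  · intro x hx y hy
    rcases Submodule.mem_sup.1 hy with ⟨a, ha, b, hb', rfl⟩
    have h1 : hb n a x = 0 := hx.1 a ha
    have h2 : hb n b x = 0 := hx.2 b hb'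
    show hb n (a + b) x = 0
    rw [map_add, LinearMap.add_apply, h1, h2, add_zero]

lemma orth_inf (n : ℕ) (A B : Submodule (ZMod 2) (E n)) :
    orth n (A ⊓ B) = orth n A ⊔ orth n B := by
  conv_lhs => rw [← orth_orth n A, ← orth_orth n B]
  rw [← orth_sup, orth_orth]

lemma iso_le_orth (n : ℕ) {F : Submodule (ZMod 2) (E n)} (hF : IsIsotropic n F) :
    F ≤ orth n F := by
  intro x hx y hy
  have h := polar n y x
  rw [hF _ (F.add_mem hy hx), hF _ hy, hF _ hx] at h
  show hb n y x = 0
  simpa using h.symm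

lemma iso_finrank_le (n : ℕ) {F : Submodule (ZMod 2) (E n)} (hF : IsIsotropic n F) :
    finrank (ZMod 2) F ≤ n := by
  have h1 : finrank (ZMod 2) F ≤ finrank (ZMod 2) (orth n F) :=
    Submodule.finrank_mono (iso_le_orth n hF)
  have h2 := finrank_orth n F
  have h3 : finrank (ZMod 2) F ≤ 2 * n := (finrank_E n) ▸ Submodule.finrank_le F
  omega

/-- The standard Lagrangian: functions supported on the `inl` coordinates. -/
noncomputable def L0 (n : ℕ) : Submodule (ZMod 2) (E n) :=
  LinearMap.ker (LinearMap.funLeft (ZMod 2) (ZMod 2) (Sum.inr : Fin n → Fin n ⊕ Fin n))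

lemma mem_L0 (n : ℕ) (x : E n) : x ∈ L0 n ↔ ∀ j, x (Sum.inr j) = 0 := by
  simp [L0, LinearMap.mem_ker, LinearMap.funLeft, funext_iff]

lemma L0_iso (n : ℕ) : IsIsotropic n (L0 n) := by
  intro x hx
  rw [mem_L0] at hx
  unfold hypq
  simp [hx]

lemma finrank_L0 (n : ℕ) : finrank (ZMod 2) (L0 n) = n := by
  have hs : Function.Surjective (LinearMap.funLeft (ZMod 2) (ZMod 2)
      (Sum.inr : Fin n → Fin n ⊕ Fin n)) :=
    LinearMap.funLeft_surjective_of_injective _ _ _ Sum.inr_injective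
  have := LinearMap.finrank_range_add_finrank_ker
    (LinearMap.funLeft (ZMod 2) (ZMod 2) (Sum.inr : Fin n → Fin n ⊕ Fin n))
  rw [LinearMap.range_eq_top.2 hs] at this
  have h1 : finrank (ZMod 2) ((Fin n ⊕ Fin n) → ZMod 2) = 2 * n := finrank_E n
  have h2 : finrank (ZMod 2) (Fin n → ZMod 2) = n := by simp [Module.finrank_pi]
  rw [finrank_top, h1, h2] at this
  have key : ∀ K : ℕ, n + K = 2 * n → K = n := fun K h => by omega
  exact key _ this

lemma orth_L0 (n : ℕ) : orth n (L0 n) = L0 n := by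
  have hle : L0 n ≤ orth n (L0 n) := iso_le_orth n (L0_iso n)
  have h1 : finrank (ZMod 2) (orth n (L0 n)) ≤ finrank (ZMod 2) (L0 n) := by
    rw [finrank_orth, finrank_L0]; omega
  exact (Submodule.eq_of_le_of_finrank_le hle h1).symm

lemma zmod2_cases (c : ZMod 2) : c = 0 ∨ c = 1 := by revert c; decide

/-- An isotropic subspace of rank `n` is maximal. -/
lemma max_of_rank_n (n : ℕ) {F : Submodule (ZMod 2) (E n)} (hF : IsIsotropic n F)
    (hr : finrank (ZMod 2) F = n) : IsMaxIsotropic n F := by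
  have horth : orth n F = F := by
    have hle : F ≤ orth n F := iso_le_orth n hF
    have h1 : finrank (ZMod 2) (orth n F) ≤ finrank (ZMod 2) F := by
      rw [finrank_orth, hr]; omega
    exact (Submodule.eq_of_le_of_finrank_le hle h1).symm
  refine ⟨hF, fun F'' hiso hle => ?_⟩
  have : F'' ≤ orth n F'' := iso_le_orth n hiso
  have h2 : orth n F'' ≤ orth n F := orth_le n hle
  exact le_antisymm (this.trans (h2.trans_eq horth)) hle

/-- A maximal isotropic subspace has rank `n` and equals its own orthogonal. -/
lemma max_rank_eq (n : ℕ) {F : Submodule (ZMod 2) (E n)} (hF : IsMaxIsotropic n F) :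
    finrank (ZMod 2) F = n ∧ orth n F = F := by
  obtain ⟨hiso, hmax⟩ := hF
  have hkle : finrank (ZMod 2) F ≤ n := iso_finrank_le n hiso
  have hrank : finrank (ZMod 2) F = n := by
    by_contra hne
    have hk : finrank (ZMod 2) F < n := lt_of_le_of_ne hkle hne
    -- find an isotropic vector in `orth F` outside `F` inside `L0 ⊓ orth F`
    have hnotle : ¬ (L0 n ⊓ orth n F ≤ F) := by
      intro habs
      have heq : L0 n ⊓ orth n F = L0 n ⊓ F := by
        apply le_antisymm
        · exact le_inf inf_le_left habs
        · exact le_inf inf_le_left ((inf_le_right).trans (iso_le_orth n hiso))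
      have h1 : orth n (L0 n ⊓ orth n F) = L0 n ⊔ F := by
        rw [orth_inf, orth_L0, orth_orth]
      have h2 : orth n (L0 n ⊓ F) = L0 n ⊔ orth n F := by
        rw [orth_inf, orth_L0]
      have h3 : L0 n ⊔ F = L0 n ⊔ orth n F := by rw [← h1, ← h2, heq]
      have d1 := Submodule.finrank_sup_add_finrank_inf_eq (L0 n) F
      have d2 := Submodule.finrank_sup_add_finrank_inf_eq (L0 n) (orth n F)
      rw [h3] at d1
      rw [← heq] at d1
      rw [finrank_L0] at d1 d2
      rw [finrank_orth] at d2
      omega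
    rw [SetLike.not_le_iff_exists] at hnotle
    obtain ⟨u, hu, huF⟩ := hnotle
    have huL : u ∈ L0 n := hu.1
    have huO : u ∈ orth n F := hu.2
    -- F ⊔ span u is isotropic
    have hiso' : IsIsotropic n (F ⊔ Submodule.span (ZMod 2) {u}) := by
      intro x hx
      rcases Submodule.mem_sup.1 hx with ⟨a, ha, b, hbmem, rfl⟩
      rcases Submodule.mem_span_singleton.1 hbmem with ⟨c, rfl⟩
      rcases zmod2_cases c with rfl | rfl
      · simpa using hiso a ha
      · have h3 : hb n a u = 0 := huO a ha
        rw [one_smul, polar n a u, hiso a ha, L0_iso n u huL, h3]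
        simp
    have := hmax _ hiso' le_sup_left
    apply huF
    rw [← this]
    exact Submodule.mem_sup_right (Submodule.mem_span_singleton_self u)
  refine ⟨hrank, ?_⟩
  have hle : F ≤ orth n F := iso_le_orth n hiso
  have h1 : finrank (ZMod 2) (orth n F) ≤ finrank (ZMod 2) F := by
    rw [finrank_orth, hrank]; omega
  exact (Submodule.eq_of_le_of_finrank_le hle h1).symm

/-- Existence of an anisotropic vector orthogonal to a non-maximal isotropic subspace. -/
lemma exists_aniso (n : ℕ) {F' : Submodule (ZMod 2) (E n)} (hiso : IsIsotropic n F')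
    (hnotmax : ¬ IsMaxIsotropic n F') :
    ∃ v, v ∈ orth n F' ∧ hypq n v = 1 := by
  by_contra h
  push_neg at h
  have hallzero : IsIsotropic n (orth n F') := by
    intro x hx
    rcases zmod2_cases (hypq n x) with h0 | h1
    · exact h0
    · exact absurd h1 (h x hx)
  apply hnotmax
  have heq : orth n F' = F' := by
    apply le_antisymm
    · have := iso_le_orth n hallzero
      rwa [orth_orth] at this
    · exact iso_le_orth n hiso
  refine ⟨hiso, fun F'' hiso'' hle => ?_⟩
  have : F'' ≤ orth n F'' := iso_le_orth n hiso''
  exact le_antisymm (this.trans ((orth_le n hle).trans_eq heq)) hle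

/-- The orthogonal transvection attached to `v`. -/
noncomputable def tau (n : ℕ) (v : E n) : E n →ₗ[ZMod 2] E n :=
  LinearMap.id + ((hb n).flip v).smulRight v

lemma tau_apply (n : ℕ) (v x : E n) : tau n v x = x + (hb n x v) • v := by
  simp [tau, LinearMap.smulRight_apply]

lemma addself (n : ℕ) (x : E n) : x + x = 0 := by
  funext i
  have : ∀ a : ZMod 2, a + a = 0 := by decide
  exact this (x i)

lemma tau_tau (n : ℕ) (v : E n) (x : E n) : tau n v (tau n v x) = x := by
  have h : ∀ a : ZMod 2, a + a = 0 := by decide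
  rw [tau_apply, tau_apply, map_add, map_smul, LinearMap.add_apply, LinearMap.smul_apply,
    hb_self, smul_zero, add_zero, add_assoc, ← add_smul, h, zero_smul, add_zero]

lemma hypq_tau (n : ℕ) (v : E n) (hv : hypq n v = 1) (x : E n) :
    hypq n (tau n v x) = hypq n x := by
  rw [tau_apply]
  rcases zmod2_cases (hb n x v) with h | h <;> rw [h]
  · simp
  · rw [one_smul, polar, hv, h, add_assoc, show (1 : ZMod 2) + 1 = 0 from by decide, add_zero]

lemma hb_tau_right (n : ℕ) (v x y : E n) : hb n (tau n v x) y = hb n x y + hb n x v * hb n v y := by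
  rw [tau_apply, map_add, LinearMap.add_apply, map_smul, LinearMap.smul_apply, smul_eq_mul]

/-- `tau` as a linear equivalence. -/
noncomputable def tauEquiv (n : ℕ) (v : E n) : E n ≃ₗ[ZMod 2] E n :=
  LinearEquiv.ofLinear (tau n v) (tau n v)
    (LinearMap.ext fun x => tau_tau n v x) (LinearMap.ext fun x => tau_tau n v x)


lemma hsymm0 (n : ℕ) (x y : E n) (h : hb n x y = 0) : hb n y x = 0 := by
  rw [hb_symm]; exact h

lemma mem_Kv (n : ℕ) (v x : E n) :
    x ∈ orth n (Submodule.span (ZMod 2) {v}) ↔ hb n v x = 0 := by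
  constructor
  · exact fun h => h v (Submodule.mem_span_singleton_self v)
  · intro h y hy
    rcases Submodule.mem_span_singleton.1 hy with ⟨c, rfl⟩
    show hb n (c • v) x = 0
    rw [map_smul, LinearMap.smul_apply, h, smul_zero]

lemma finrank_Kv (n : ℕ) {v : E n} (hv0 : v ≠ 0) :
    finrank (ZMod 2) (orth n (Submodule.span (ZMod 2) {v})) = 2 * n - 1 := by
  rw [finrank_orth, finrank_span_singleton hv0]

lemma two_n_pos (n : ℕ) {v : E n} (hv0 : v ≠ 0) : 1 ≤ 2 * n := by
  have h1 : finrank (ZMod 2) (Submodule.span (ZMod 2) ({v} : Set (E n))) = 1 :=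
    finrank_span_singleton hv0
  have h2 := Submodule.finrank_le (Submodule.span (ZMod 2) ({v} : Set (E n)))
  rw [finrank_E] at h2
  omega

/-- Step lemma: intersecting with the hyperplane `Kv` drops the rank by exactly one
if some element pairs nontrivially with `v`. -/
lemma rank_step_one (n : ℕ) {v : E n} (hv0 : v ≠ 0) {K : Submodule (ZMod 2) (E n)}
    (ha : ∃ a ∈ K, hb n a v = 1) :
    finrank (ZMod 2) K
      = finrank (ZMod 2) (K ⊓ orth n (Submodule.span (ZMod 2) {v}) :
          Submodule (ZMod 2) (E n)) + 1 := by
  set Kv := orth n (Submodule.span (ZMod 2) {v}) with hKv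
  obtain ⟨a, haK, hav⟩ := ha
  have hne : K ⊓ Kv ≠ K := by
    intro h
    have haKv : a ∈ Kv := by
      have : a ∈ K ⊓ Kv := h.symm ▸ haK
      exact this.2
    rw [mem_Kv] at haKv
    have := hsymm0 n v a haKv
    rw [hav] at this
    exact one_ne_zero this
  have hlt : (K ⊓ Kv : Submodule (ZMod 2) (E n)) < K := lt_of_le_of_ne inf_le_left hne
  have h1 : finrank (ZMod 2) (K ⊓ Kv : Submodule (ZMod 2) (E n)) < finrank (ZMod 2) K :=
    Submodule.finrank_lt_finrank_of_lt hlt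
  have h2 := Submodule.finrank_sup_add_finrank_inf_eq K Kv
  have h3 : finrank (ZMod 2) (K ⊔ Kv : Submodule (ZMod 2) (E n)) ≤ 2 * n := by
    rw [← finrank_E n]; exact Submodule.finrank_le _
  have h4 : finrank (ZMod 2) Kv = 2 * n - 1 := finrank_Kv n hv0
  have h5 := two_n_pos n hv0
  omega

lemma rank_step_zero (n : ℕ) {v : E n} {K : Submodule (ZMod 2) (E n)}
    (ha : ¬ ∃ a ∈ K, hb n a v = 1) :
    (K ⊓ orth n (Submodule.span (ZMod 2) {v}) : Submodule (ZMod 2) (E n)) = K := by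
  push_neg at ha
  refine le_antisymm inf_le_left (le_inf le_rfl fun x hx => ?_)
  rw [mem_Kv]
  apply hsymm0
  rcases zmod2_cases (hb n x v) with h0 | h1
  · exact h0
  · exact absurd h1 (ha x hx)

/-- Key parity lemma: applying the transvection `tau v` to a maximal isotropic `F`
changes the parity of `finrank (F ⊓ G)` for any maximal isotropic `G`. -/
lemma parity_lemma (n : ℕ) {F G : Submodule (ZMod 2) (E n)} (hF : IsMaxIsotropic n F)
    (hG : IsMaxIsotropic n G) {v : E n} (hv : hypq n v = 1) :
    Odd (finrank (ZMod 2) (Submodule.map (tau n v) F ⊓ G : Submodule (ZMod 2) (E n)) +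
      finrank (ZMod 2) (F ⊓ G : Submodule (ZMod 2) (E n))) := by
  have hFiso := hF.1
  have hGiso := hG.1
  have hFr := max_rank_eq n hF
  have hGr := max_rank_eq n hG
  have hv0 : v ≠ 0 := by
    intro h
    rw [h] at hv
    unfold hypq at hv
    simp at hv
  set V := Submodule.span (ZMod 2) ({v} : Set (E n)) with hV
  set Kv := orth n V with hKvdef
  -- v ∉ F, v ∉ G
  have hvnotF : v ∉ F := by
    intro h
    have := hFiso v h
    rw [hv] at this
    exact one_ne_zero this
  -- there is f ∈ F with hb f v = 1
  have hf : ∃ f ∈ F, hb n f v = 1 := by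
    by_contra h
    push_neg at h
    have hvF : v ∈ orth n F := by
      intro y hy
      show hb n y v = 0
      rcases zmod2_cases (hb n y v) with h0 | h1
      · exact h0
      · exact absurd h1 (h y hy)
    rw [hFr.2] at hvF
    exact hvnotF hvF
  obtain ⟨f, hfF, hfv⟩ := hf
  -- orthogonal of F ⊓ Kv
  have hoF₁ : orth n (F ⊓ Kv) = F ⊔ V := by
    rw [hKvdef, orth_inf, hFr.2, orth_orth]
  -- map τ F ⊓ Kv = F ⊓ Kv
  have hmapinf : Submodule.map (tau n v) F ⊓ Kv = F ⊓ Kv := by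
    ext x
    constructor
    · rintro ⟨⟨y, hy, rfl⟩, hxKv⟩
      have h1 : hb n v (tau n v y) = hb n v y := by
        rw [tau_apply, map_add, map_smul, hb_self, smul_zero, add_zero]
      have h2 : hb n v y = 0 := by
        rw [← h1]
        exact (mem_Kv n v _).1 hxKv
      have h3 : tau n v y = y := by
        rw [tau_apply, hsymm0 n v y h2, zero_smul, add_zero]
      rw [h3]
      rw [h3] at hxKv
      exact ⟨hy, hxKv⟩
    · rintro ⟨hxF, hxKv⟩
      have hb0 : hb n x v = 0 := hsymm0 n v x ((mem_Kv n v x).1 hxKv)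
      refine ⟨⟨x, hxF, ?_⟩, hxKv⟩
      rw [tau_apply, hb0, zero_smul, add_zero]
  -- dichotomy : at least one
  have hdich : (∃ a ∈ F ⊓ G, hb n a v = 1) ∨
      (∃ b ∈ Submodule.map (tau n v) F ⊓ G, hb n b v = 1) := by
    -- f belongs to G ⊔ (F ⊓ Kv ⊔ V)
    have hfGH : f ∈ G ⊔ (F ⊓ Kv ⊔ V) := by
      rw [← orth_orth n (G ⊔ (F ⊓ Kv ⊔ V))]
      intro w hw
      show hb n w f = 0
      have hwG : w ∈ G := by
        have := orth_le n (le_sup_left : G ≤ G ⊔ (F ⊓ Kv ⊔ V)) hw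
        rwa [hGr.2] at this
      have hwKv : w ∈ Kv := by
        refine orth_le n ?_ hw
        exact le_trans le_sup_right le_sup_right
      have hwFV : w ∈ F ⊔ V := by
        rw [← hoF₁]
        refine orth_le n ?_ hw
        exact le_trans le_sup_left le_sup_right
      rcases Submodule.mem_sup.1 hwFV with ⟨y, hyF, b, hbV, rfl⟩
      rcases Submodule.mem_span_singleton.1 hbV with ⟨c, rfl⟩
      have hvy : hb n v y = 0 := by
        have := (mem_Kv n v _).1 hwKv
        rw [map_add, map_smul, hb_self, smul_zero, add_zero] at this
        exact this
      rcases zmod2_cases c with rfl | rfl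
      · -- w = y ∈ F
        rw [zero_smul, add_zero]
        have : f ∈ orth n F := iso_le_orth n hFiso hfF
        exact this y hyF
      · -- w = y + v has hypq = 1, contradiction with w ∈ G
        exfalso
        rw [one_smul] at hwG
        have hq : hypq n (y + v) = 1 := by
          rw [polar, hFiso y hyF, hv, hsymm0 n v y hvy]
          decide
        rw [hGiso _ hwG] at hq
        exact one_ne_zero hq.symm
    rcases Submodule.mem_sup.1 hfGH with ⟨g, hgG, h, hh, hsum⟩
    have hg : g = f + h := by
      rw [← hsum, add_assoc, addself, add_zero]
    rcases Submodule.mem_sup.1 hh with ⟨x, hxF₁, b, hbV, rfl⟩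
    rcases Submodule.mem_span_singleton.1 hbV with ⟨c, rfl⟩
    have hxF : x ∈ F := hxF₁.1
    have hxv : hb n x v = 0 := hsymm0 n v x ((mem_Kv n v x).1 hxF₁.2)
    rcases zmod2_cases c with rfl | rfl
    · left
      refine ⟨f + x, ⟨F.add_mem hfF hxF, ?_⟩, ?_⟩
      · have : g = f + x := by rw [hg, zero_smul, add_zero]
        rw [← this]; exact hgG
      · rw [map_add, LinearMap.add_apply, hfv, hxv, add_zero]
    · right
      have hfxv : hb n (f + x) v = 1 := by
        rw [map_add, LinearMap.add_apply, hfv, hxv, add_zero]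
      refine ⟨f + x + v, ⟨⟨f + x, F.add_mem hfF hxF, ?_⟩, ?_⟩, ?_⟩
      · rw [tau_apply, hfxv, one_smul]
      · have : g = f + x + v := by rw [hg, one_smul, ← add_assoc]
        rw [← this]; exact hgG
      · rw [map_add, LinearMap.add_apply, hfxv, hb_self, add_zero]
  -- dichotomy : not both
  have hnotboth : ¬ ((∃ a ∈ F ⊓ G, hb n a v = 1) ∧
      (∃ b ∈ Submodule.map (tau n v) F ⊓ G, hb n b v = 1)) := by
    rintro ⟨⟨a, ⟨haF, haG⟩, hav⟩, ⟨b, ⟨⟨c₀, hc₀F, rfl⟩, hbG⟩, hbv⟩⟩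
    have hc₀v : hb n c₀ v = 1 := by
      have : hb n (tau n v c₀) v = hb n c₀ v := by
        rw [tau_apply, map_add, map_smul, LinearMap.add_apply, LinearMap.smul_apply,
          hb_self, smul_zero, add_zero]
      rw [← this, hbv]
    have htc : tau n v c₀ = c₀ + v := by rw [tau_apply, hc₀v, one_smul]
    have hw : a + (c₀ + v) ∈ G := by
      rw [← htc]
      exact G.add_mem haG hbG
    have hq : hypq n (a + (c₀ + v)) = 1 := by
      rw [← add_assoc, polar, polar, hFiso a haF, hFiso c₀ hc₀F, hv]
      have hac : hb n a c₀ = 0 := iso_le_orth n hFiso hc₀F a haF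
      have hacv : hb n (a + c₀) v = 0 := by
        rw [map_add, LinearMap.add_apply, hav, hc₀v]
        decide
      rw [hac, hacv]
      decide
    rw [hGiso _ hw] at hq
    exact one_ne_zero hq.symm
  -- rank bookkeeping
  have hinf1 : (F ⊓ G) ⊓ Kv = (F ⊓ Kv) ⊓ G := by
    rw [inf_right_comm]
  have hinf2 : (Submodule.map (tau n v) F ⊓ G) ⊓ Kv = (F ⊓ Kv) ⊓ G := by
    rw [inf_right_comm, hmapinf]
  rcases hdich with hl | hr
  · have h1 : finrank (ZMod 2) (F ⊓ G : Submodule (ZMod 2) (E n))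
        = finrank (ZMod 2) ((F ⊓ Kv) ⊓ G : Submodule (ZMod 2) (E n)) + 1 := by
      rw [rank_step_one n hv0 hl, ← hKvdef, hinf1]
    have hnr : ¬ ∃ b ∈ Submodule.map (tau n v) F ⊓ G, hb n b v = 1 :=
      fun h => hnotboth ⟨hl, h⟩
    have h2 : finrank (ZMod 2) (Submodule.map (tau n v) F ⊓ G : Submodule (ZMod 2) (E n))
        = finrank (ZMod 2) ((F ⊓ Kv) ⊓ G : Submodule (ZMod 2) (E n)) := by
      conv_lhs => rw [← rank_step_zero n hnr]
      rw [← hKvdef, hinf2]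
    rw [h1, h2]
    exact ⟨finrank (ZMod 2) ((F ⊓ Kv) ⊓ G : Submodule (ZMod 2) (E n)), by ring⟩
  · have h1 : finrank (ZMod 2) (Submodule.map (tau n v) F ⊓ G : Submodule (ZMod 2) (E n))
        = finrank (ZMod 2) ((F ⊓ Kv) ⊓ G : Submodule (ZMod 2) (E n)) + 1 := by
      rw [rank_step_one n hv0 hr, ← hKvdef, hinf2]
    have hnl : ¬ ∃ a ∈ F ⊓ G, hb n a v = 1 := fun h => hnotboth ⟨h, hr⟩
    have h2 : finrank (ZMod 2) (F ⊓ G : Submodule (ZMod 2) (E n))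
        = finrank (ZMod 2) ((F ⊓ Kv) ⊓ G : Submodule (ZMod 2) (E n)) := by
      conv_lhs => rw [← rank_step_zero n hnl]
      rw [← hKvdef, hinf1]
    rw [h1, h2]
    exact ⟨finrank (ZMod 2) ((F ⊓ Kv) ⊓ G : Submodule (ZMod 2) (E n)), by ring⟩

lemma neg_one_pow_sum (d1 d2 : ℕ) (h : Odd (d1 + d2)) :
    (-1 : ℤ) ^ d1 + (-1 : ℤ) ^ d2 = 0 := by
  rw [Nat.odd_iff] at h
  rcases Nat.even_or_odd d1 with h1 | h1
  · have h2 : Odd d2 := by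
      rw [Nat.odd_iff]
      rw [Nat.even_iff] at h1
      omega
    rw [h1.neg_one_pow, h2.neg_one_pow]
    ring
  · have h2 : Even d2 := by
      rw [Nat.even_iff]
      rw [Nat.odd_iff] at h1
      omega
    rw [h1.neg_one_pow, h2.neg_one_pow]
    ring

/-- `tau` maps maximal isotropics containing `F'` to maximal isotropics containing `F'`. -/
lemma tau_max (n : ℕ) {F : Submodule (ZMod 2) (E n)} (hF : IsMaxIsotropic n F)
    {v : E n} (hv : hypq n v = 1) :
    IsMaxIsotropic n (Submodule.map (tau n v) F) := by
  apply max_of_rank_n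
  · rintro x ⟨y, hy, rfl⟩
    rw [hypq_tau n v hv]
    exact hF.1 y hy
  · have : Submodule.map (tau n v) F
        = Submodule.map ((tauEquiv n v : E n →ₗ[ZMod 2] E n)) F := rfl
    rw [this, LinearEquiv.finrank_map_eq]
    exact (max_rank_eq n hF).1

lemma tau_map_map (n : ℕ) (v : E n) (F : Submodule (ZMod 2) (E n)) :
    Submodule.map (tau n v) (Submodule.map (tau n v) F) = F := by
  rw [← Submodule.map_comp]
  have : (tau n v) ∘ₗ (tau n v) = LinearMap.id := LinearMap.ext fun x => tau_tau n v x
  rw [this, Submodule.map_id]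

lemma tau_map_ne (n : ℕ) {F : Submodule (ZMod 2) (E n)} (hF : IsMaxIsotropic n F)
    {v : E n} (hv : hypq n v = 1) : Submodule.map (tau n v) F ≠ F := by
  intro heq
  have hFr := max_rank_eq n hF
  have hvnotF : v ∉ F := by
    intro h
    have := hF.1 v h
    rw [hv] at this
    exact one_ne_zero this
  have hf : ∃ f ∈ F, hb n f v = 1 := by
    by_contra h
    push_neg at h
    have hvF : v ∈ orth n F := by
      intro y hy
      show hb n y v = 0
      rcases zmod2_cases (hb n y v) with h0 | h1
      · exact h0
      · exact absurd h1 (h y hy)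
    rw [hFr.2] at hvF
    exact hvnotF hvF
  obtain ⟨f, hfF, hfv⟩ := hf
  have htf : tau n v f ∈ F := by
    rw [← heq]
    exact ⟨f, hfF, rfl⟩
  rw [tau_apply, hfv, one_smul] at htf
  have : v ∈ F := by
    have := F.add_mem hfF htf
    rwa [← add_assoc, addself, zero_add] at this
  exact hvnotF this

instance (n : ℕ) : Finite (Submodule (ZMod 2) (E n)) :=
  Finite.of_injective (fun p => (p : Set (E n))) SetLike.coe_injective

end HypAux

open HypAux

/-- Fix a maximal isotropic subspace `F₀` of the hyperbolic
`F₂`-space of dimension `2n` and put `ε(F) = (−1)^{dim (F ⊓ F₀)}` for maximal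
isotropic `F`.  Then for every isotropic subspace `F'` which is not maximal, the
sum of `ε(F)` over all maximal isotropic subspaces `F` containing `F'` vanishes. -/
theorem sum_epsilon_over_max_isotropic_containing (n : ℕ)
    (F₀ : Submodule (ZMod 2) ((Fin n ⊕ Fin n) → ZMod 2)) (hF₀ : IsMaxIsotropic n F₀)
    (F' : Submodule (ZMod 2) ((Fin n ⊕ Fin n) → ZMod 2))
    (hiso : IsIsotropic n F') (hnotmax : ¬ IsMaxIsotropic n F') :
    ∑ᶠ F : {F : Submodule (ZMod 2) ((Fin n ⊕ Fin n) → ZMod 2) //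
              IsMaxIsotropic n F ∧ F' ≤ F},
      ((-1 : ℤ) ^ Module.finrank (ZMod 2) ((F : Submodule (ZMod 2) _) ⊓ F₀ :
          Submodule (ZMod 2) _)) = 0 := by
  classical
  obtain ⟨v, hvO, hv1⟩ := exists_aniso n hiso hnotmax
  have : Fintype {F : Submodule (ZMod 2) ((Fin n ⊕ Fin n) → ZMod 2) //
      IsMaxIsotropic n F ∧ F' ≤ F} := Fintype.ofFinite _
  rw [finsum_eq_sum_of_fintype]
  have hle_map : ∀ (F : Submodule (ZMod 2) (E n)), F' ≤ F →
      F' ≤ Submodule.map (tau n v) F := by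
    intro F hle x hx
    have hxv : hb n x v = 0 := hvO x hx
    have : tau n v x = x := by rw [tau_apply, hxv, zero_smul, add_zero]
    exact ⟨x, hle hx, this⟩
  refine Finset.sum_ninvolution
    (fun Fp => ⟨Submodule.map (tau n v) Fp.1, tau_max n Fp.2.1 hv1, hle_map Fp.1 Fp.2.2⟩)
    ?_ ?_ (fun _ => Finset.mem_univ _) ?_
  · intro Fp
    exact neg_one_pow_sum _ _ (by
      have := parity_lemma n Fp.2.1 hF₀ hv1
      rwa [add_comm] at this)
  · intro Fp _
    intro h
    exact tau_map_ne n Fp.2.1 hv1 (congrArg Subtype.val h)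
  · intro Fp
    exact Subtype.ext (tau_map_map n v Fp.1)
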